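/- Let H be a closed operator on a Hilbert space ℋ with domain D(H) such that Im⟨u, Hu⟩ = -½‖Cu‖² for all u ∈ D(H), where C is a bounded operator, and suppose H generates a strongly continuous semigroup {e^{-itH}}_{t≥0}. Then for all u ∈ ℋ and all t ≥ 0, ∫₀ᵗ ‖C e^{-isH} u‖² ds = ‖u‖² - ‖e^{-itH} u‖², and in particular ∫₀^∞ ‖C e^{-itH} u‖² dt ≤ ‖u‖². -/

import Mathlib

open MeasureTheory Filter Topology ContinuousLinearMap

/-- dissipation identity and smoothness bound for the semigroup
generated by `H = H₀ - (i/2)C*C`, encoded abstractly: `U t = e^{-itH}` is a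
strongly continuous semigroup whose generator `Hop` (defined on a dense domain
`Dom`, invariant under the semigroup) satisfies `Im⟪u, Hop u⟫ = -½‖Cu‖²`. -/
theorem stmt0
    {ℋ : Type*} [NormedAddCommGroup ℋ] [InnerProductSpace ℂ ℋ] [CompleteSpace ℋ]
    [TopologicalSpace.SeparableSpace ℋ]
    (C : ℋ →L[ℂ] ℋ)
    (Dom : Set ℋ) (hdense : Dense Dom)
    (Hop : ℋ → ℋ)
    (U : ℝ → ℋ →L[ℂ] ℋ)
    (hU0 : U 0 = 1)
    (hsemi : ∀ s t : ℝ, 0 ≤ s → 0 ≤ t → U (s + t) = (U s).comp (U t))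
    (hcont : ∀ u : ℋ, Continuous fun t => U t u)
    (hinv : ∀ t : ℝ, 0 ≤ t → ∀ u ∈ Dom, U t u ∈ Dom)
    (hdiss : ∀ u ∈ Dom, (@inner ℂ ℋ _ u (Hop u)).im = -(1 / 2) * ‖C u‖ ^ 2)
    (hgen : ∀ u ∈ Dom, ∀ t : ℝ, 0 ≤ t →
      HasDerivAt (fun s => U s u) (-(Complex.I • Hop (U t u))) t) :
    ∀ u : ℋ,
      (∀ t : ℝ, 0 ≤ t →
        ∫ s in (0:ℝ)..t, ‖C (U s u)‖ ^ 2 = ‖u‖ ^ 2 - ‖U t u‖ ^ 2) ∧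
      IntegrableOn (fun t => ‖C (U t u)‖ ^ 2) (Set.Ioi (0:ℝ)) ∧
      ∫ t in Set.Ioi (0:ℝ), ‖C (U t u)‖ ^ 2 ≤ ‖u‖ ^ 2 := by
  letI : InnerProductSpace ℝ ℋ := InnerProductSpace.complexToReal
  have hgcont : ∀ u : ℋ, Continuous fun s : ℝ => ‖C (U s u)‖ ^ 2 := fun u =>
    ((C.continuous.comp (hcont u)).norm.pow 2)
  have hU0u : ∀ u : ℋ, U 0 u = u := fun u => by rw [hU0]; rfl
  -- Step 1: the identity on the dense domain
  have key : ∀ u ∈ Dom, ∀ t : ℝ, 0 ≤ t →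
      ∫ s in (0:ℝ)..t, ‖C (U s u)‖ ^ 2 = ‖u‖ ^ 2 - ‖U t u‖ ^ 2 := by
    intro u hu t ht
    have hderiv : ∀ s ∈ Set.uIcc (0:ℝ) t,
        HasDerivAt (fun r => ‖U r u‖ ^ 2) (-(‖C (U s u)‖ ^ 2)) s := by
      intro s hs
      rw [Set.uIcc_of_le ht] at hs
      have hs0 : 0 ≤ s := hs.1
      have h1 := (hgen u hu s hs0).norm_sq
      have hmem : U s u ∈ Dom := hinv s hs0 u hu
      have hd := hdiss (U s u) hmem
      convert h1 using 1
      have hre : (inner ℝ (U s u) (-(Complex.I • Hop (U s u))) : ℝ)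
          = (@inner ℂ ℋ _ (U s u) (-(Complex.I • Hop (U s u)))).re := rfl
      rw [hre, inner_neg_right, inner_smul_right]
      simp only [Complex.neg_re, Complex.mul_re, Complex.I_re, Complex.I_im]
      rw [hd]
      ring
    have hint : IntervalIntegrable (fun s => -(‖C (U s u)‖ ^ 2)) volume 0 t :=
      ((hgcont u).neg).intervalIntegrable 0 t
    have hftc := intervalIntegral.integral_eq_sub_of_hasDerivAt hderiv hint
    rw [intervalIntegral.integral_neg, hU0u u] at hftc
    linarith
  -- Step 2: contraction property
  have hcontr : ∀ t : ℝ, 0 ≤ t → ∀ u : ℋ, ‖U t u‖ ≤ ‖u‖ := by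
    intro t ht u
    have hsub : Dom ⊆ {v : ℋ | ‖U t v‖ ≤ ‖v‖} := by
      intro v hv
      have h := key v hv t ht
      have hpos : 0 ≤ ∫ s in (0:ℝ)..t, ‖C (U s v)‖ ^ 2 :=
        intervalIntegral.integral_nonneg ht (fun s _ => by positivity)
      have hsq : ‖U t v‖ ^ 2 ≤ ‖v‖ ^ 2 := by linarith
      exact (pow_le_pow_iff_left₀ (norm_nonneg _) (norm_nonneg _) two_ne_zero).mp hsq
    have hclosed : IsClosed {v : ℋ | ‖U t v‖ ≤ ‖v‖} :=
      isClosed_le ((U t).continuous.norm) continuous_norm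
    have : closure Dom ⊆ {v : ℋ | ‖U t v‖ ≤ ‖v‖} := hclosed.closure_subset_iff.mpr hsub
    have hall : (Set.univ : Set ℋ) ⊆ {v : ℋ | ‖U t v‖ ≤ ‖v‖} := by
      rw [← hdense.closure_eq]; exact this
    exact hall (Set.mem_univ u)
  -- Lipschitz-type estimate for the interval integral, as a function of u
  have hFest : ∀ t : ℝ, 0 ≤ t → ∀ v w : ℋ,
      |(∫ s in (0:ℝ)..t, ‖C (U s v)‖ ^ 2) - ∫ s in (0:ℝ)..t, ‖C (U s w)‖ ^ 2|
        ≤ t * (‖C‖ ^ 2 * (‖v‖ + ‖w‖) * ‖v - w‖) := by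
    intro t ht v w
    have hiv : IntervalIntegrable (fun s => ‖C (U s v)‖ ^ 2) volume 0 t :=
      (hgcont v).intervalIntegrable 0 t
    have hiw : IntervalIntegrable (fun s => ‖C (U s w)‖ ^ 2) volume 0 t :=
      (hgcont w).intervalIntegrable 0 t
    have hdiffc : Continuous fun s : ℝ => ‖C (U s v)‖ ^ 2 - ‖C (U s w)‖ ^ 2 :=
      (hgcont v).sub (hgcont w)
    rw [← intervalIntegral.integral_sub hiv hiw]
    have h1 : |∫ s in (0:ℝ)..t, (‖C (U s v)‖ ^ 2 - ‖C (U s w)‖ ^ 2)|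
        ≤ ∫ s in (0:ℝ)..t, |‖C (U s v)‖ ^ 2 - ‖C (U s w)‖ ^ 2| :=
      intervalIntegral.abs_integral_le_integral_abs ht
    have h2 : (∫ s in (0:ℝ)..t, |‖C (U s v)‖ ^ 2 - ‖C (U s w)‖ ^ 2|)
        ≤ ∫ _ in (0:ℝ)..t, ‖C‖ ^ 2 * (‖v‖ + ‖w‖) * ‖v - w‖ := by
      apply intervalIntegral.integral_mono_on ht (hdiffc.abs.intervalIntegrable 0 t)
        (intervalIntegrable_const)
      intro s hs
      have hs0 : 0 ≤ s := hs.1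
      set a := C (U s v)
      set b := C (U s w)
      have hab : a - b = C (U s (v - w)) := by simp [a, b, map_sub]
      have h3 : ‖a - b‖ ≤ ‖C‖ * ‖v - w‖ := by
        rw [hab]
        calc ‖C (U s (v - w))‖ ≤ ‖C‖ * ‖U s (v - w)‖ := C.le_opNorm _
          _ ≤ ‖C‖ * ‖v - w‖ := by
              have := hcontr s hs0 (v - w)
              exact mul_le_mul_of_nonneg_left this (norm_nonneg _)
      have h4 : ‖a‖ ≤ ‖C‖ * ‖v‖ := by
        calc ‖a‖ ≤ ‖C‖ * ‖U s v‖ := C.le_opNorm _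
          _ ≤ ‖C‖ * ‖v‖ := mul_le_mul_of_nonneg_left (hcontr s hs0 v) (norm_nonneg _)
      have h5 : ‖b‖ ≤ ‖C‖ * ‖w‖ := by
        calc ‖b‖ ≤ ‖C‖ * ‖U s w‖ := C.le_opNorm _
          _ ≤ ‖C‖ * ‖w‖ := mul_le_mul_of_nonneg_left (hcontr s hs0 w) (norm_nonneg _)
      have h6 : |‖a‖ ^ 2 - ‖b‖ ^ 2| ≤ (‖a‖ + ‖b‖) * ‖a - b‖ := by
        have : ‖a‖ ^ 2 - ‖b‖ ^ 2 = (‖a‖ + ‖b‖) * (‖a‖ - ‖b‖) := by ring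
        rw [this, abs_mul, abs_of_nonneg (by positivity : (0:ℝ) ≤ ‖a‖ + ‖b‖)]
        exact mul_le_mul_of_nonneg_left (abs_norm_sub_norm_le a b) (by positivity)
      calc |‖a‖ ^ 2 - ‖b‖ ^ 2| ≤ (‖a‖ + ‖b‖) * ‖a - b‖ := h6
        _ ≤ (‖C‖ * ‖v‖ + ‖C‖ * ‖w‖) * (‖C‖ * ‖v - w‖) := by
            apply mul_le_mul (add_le_add h4 h5) h3 (norm_nonneg _)
            positivity
        _ = ‖C‖ ^ 2 * (‖v‖ + ‖w‖) * ‖v - w‖ := by ring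
    calc |∫ s in (0:ℝ)..t, (‖C (U s v)‖ ^ 2 - ‖C (U s w)‖ ^ 2)|
        ≤ ∫ _ in (0:ℝ)..t, ‖C‖ ^ 2 * (‖v‖ + ‖w‖) * ‖v - w‖ := h1.trans h2
      _ = t * (‖C‖ ^ 2 * (‖v‖ + ‖w‖) * ‖v - w‖) := by
          rw [intervalIntegral.integral_const, smul_eq_mul, sub_zero]
  -- Step 3: the identity for all u by density
  have keyall : ∀ (u : ℋ) (t : ℝ), 0 ≤ t →
      ∫ s in (0:ℝ)..t, ‖C (U s u)‖ ^ 2 = ‖u‖ ^ 2 - ‖U t u‖ ^ 2 := by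
    intro u t ht
    obtain ⟨uN, huNmem, huN⟩ := mem_closure_iff_seq_limit.mp (hdense u)
    have h0 : Tendsto (fun n => ‖uN n - u‖) atTop (𝓝 0) := by
      have := (huN.sub (tendsto_const_nhds (x := u))).norm
      simpa using this
    have hB : Tendsto (fun n => t * (‖C‖ ^ 2 * (‖uN n‖ + ‖u‖) * ‖uN n - u‖)) atTop (𝓝 0) := by
      have : Tendsto (fun n => t * (‖C‖ ^ 2 * (‖uN n‖ + ‖u‖) * ‖uN n - u‖)) atTop
          (𝓝 (t * (‖C‖ ^ 2 * (‖u‖ + ‖u‖) * 0))) := by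
        apply Tendsto.mul tendsto_const_nhds
        exact (Tendsto.mul tendsto_const_nhds (huN.norm.add tendsto_const_nhds)).mul h0
      simpa using this
    have hF : Tendsto (fun n => ∫ s in (0:ℝ)..t, ‖C (U s (uN n))‖ ^ 2) atTop
        (𝓝 (∫ s in (0:ℝ)..t, ‖C (U s u)‖ ^ 2)) := by
      rw [tendsto_iff_dist_tendsto_zero]
      apply squeeze_zero (fun n => dist_nonneg) _ hB
      intro n
      rw [Real.dist_eq]
      exact hFest t ht (uN n) u
    have hG : Tendsto (fun n => ‖uN n‖ ^ 2 - ‖U t (uN n)‖ ^ 2) atTop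
        (𝓝 (‖u‖ ^ 2 - ‖U t u‖ ^ 2)) := by
      apply Tendsto.sub
      · exact (huN.norm.pow 2)
      · exact ((((U t).continuous.tendsto u).comp huN).norm.pow 2)
    have heq : (fun n => ∫ s in (0:ℝ)..t, ‖C (U s (uN n))‖ ^ 2)
        = fun n => ‖uN n‖ ^ 2 - ‖U t (uN n)‖ ^ 2 := by
      funext n; exact key (uN n) (huNmem n) t ht
    rw [heq] at hF
    exact tendsto_nhds_unique hF hG
  intro u
  have hIoc : ∀ T : ℝ, IntegrableOn (fun s => ‖C (U s u)‖ ^ 2) (Set.Ioc 0 T) :=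
    fun T => (hgcont u).integrableOn_Ioc
  have hbound : ∀ t : ℝ, 0 ≤ t → (∫ s in (0:ℝ)..t, ‖C (U s u)‖ ^ 2) ≤ ‖u‖ ^ 2 := by
    intro t ht
    rw [keyall u t ht]
    have : (0:ℝ) ≤ ‖U t u‖ ^ 2 := by positivity
    linarith
  have hInt : IntegrableOn (fun t => ‖C (U t u)‖ ^ 2) (Set.Ioi (0:ℝ)) := by
    apply integrableOn_Ioi_of_intervalIntegral_norm_bounded (‖u‖ ^ 2) 0
      (b := fun T : ℝ => T) (l := atTop) hIoc tendsto_id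
    filter_upwards [eventually_ge_atTop (0:ℝ)] with T hT
    have : (fun x => ‖(‖C (U x u)‖ ^ 2 : ℝ)‖) = fun x => ‖C (U x u)‖ ^ 2 := by
      funext x; rw [Real.norm_eq_abs, abs_of_nonneg (by positivity)]
    rw [intervalIntegral.integral_congr (fun x _ => congrFun this x)]
    exact hbound T hT
  refine ⟨fun t ht => keyall u t ht, hInt, ?_⟩
  have htend := intervalIntegral_tendsto_integral_Ioi 0 hInt (tendsto_id (x := atTop))
  apply le_of_tendsto htend
  filter_upwards [eventually_ge_atTop (0:ℝ)] with T hT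
  exact hbound T hT
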